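/- With k, K, R, ι, M and the Sugiyama–Yasuda symbol SY as in the context: for all f, g ∈ R, one has SY(f, g) = 0 in Ω_{K/k} if and only if there exist α, β, γ, δ ∈ k(K⁴) with αδ + βγ ≠ 0 and g = (αf + β)/(γf + δ); that is, the symbol vanishes exactly when f and g lie in the same orbit under Γ = PGL₂(k^{1/4}·K). -/

import Mathlib

set_option synthInstance.maxHeartbeats 1000000
set_option maxHeartbeats 4000000
set_option linter.unusedVariables false


open IntermediateField

/-- The subfield `k(K²)` of `K` generated by (the image of) `k` and all squares. -/
def kSq (k K : Type*) [Field k] [Field K] [Algebra k K] : IntermediateField k K :=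
  IntermediateField.adjoin k {x : K | ∃ y : K, x = y ^ 2}

/-- The subfield `k(K⁴)` of `K` generated by (the image of) `k` and all fourth
powers. -/
def kFour (k K : Type*) [Field k] [Field K] [Algebra k K] : IntermediateField k K :=
  IntermediateField.adjoin k {x : K | ∃ y : K, x = y ^ 4}

/-- `SYWitness k K ι f g s` records that `s ∈ K` computes the Sugiyama–Yasuda symbol
`SY(f, g) = s • dg`: writing (inside a perfect closure `L` of `K`, via the embedding
`ι : K → L`) `f = f₀⁴ + f₁⁴ g + f₂⁴ g² + f₃⁴ g³` with `f₀, f₁, f₂, f₃` in the subfield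
`M = k^{1/4}·K = {x : L | x⁴ ∈ ι(k(K⁴))}`, one has
`s = ((f₁f₃ + f₂²)/(f₁² + f₃² g))²`.  (The decomposition, and hence `s`, exists and is
unique; here it is recorded as a predicate.) -/
def SYWitness (k K L : Type*) [Field k] [Field K] [Algebra k K] [Field L]
    (ι : K →+* L) (f g s : K) : Prop :=
  ∃ f0 f1 f2 f3 : L,
    f0 ^ 4 ∈ ι '' (kFour k K : Set K) ∧ f1 ^ 4 ∈ ι '' (kFour k K : Set K) ∧
    f2 ^ 4 ∈ ι '' (kFour k K : Set K) ∧ f3 ^ 4 ∈ ι '' (kFour k K : Set K) ∧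
    ι f = f0 ^ 4 + f1 ^ 4 * ι g + f2 ^ 4 * (ι g) ^ 2 + f3 ^ 4 * (ι g) ^ 3 ∧
    f1 ^ 2 + f3 ^ 2 * ι g ≠ 0 ∧
    ι s = ((f1 * f3 + f2 ^ 2) / (f1 ^ 2 + f3 ^ 2 * ι g)) ^ 2

section SYAux

open Polynomial

variable {k K : Type*} [Field k] [Field K] [Algebra k K]

lemma SYaux.sq_mem_kSq (y : K) : y ^ 2 ∈ kSq k K :=
  IntermediateField.subset_adjoin _ _ ⟨y, rfl⟩

lemma SYaux.pow4_mem_kFour (y : K) : y ^ 4 ∈ kFour k K :=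
  IntermediateField.subset_adjoin _ _ ⟨y, rfl⟩

lemma SYaux.kFour_le_kSq : kFour k K ≤ kSq k K := by
  rw [kFour, IntermediateField.adjoin_le_iff]
  rintro x ⟨y, rfl⟩
  have h : (y : K) ^ 4 = (y ^ 2) ^ 2 := by ring
  rw [SetLike.mem_coe, h]
  exact SYaux.sq_mem_kSq _

/-- decomposition of elements over `kSq` using that `{1, g}` is a basis. -/
lemma SYaux.span_one_g (hdeg : Module.finrank (kSq k K) K = 2) {g : K}
    (hg : g ∉ kSq k K) (y : K) :
    ∃ a b : K, a ∈ kSq k K ∧ b ∈ kSq k K ∧ y = a + b * g := by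
  haveI : FiniteDimensional (kSq k K) K :=
    FiniteDimensional.of_finrank_pos (by rw [hdeg]; norm_num)
  have hsm : ∀ (c : kSq k K) (z : K), c • z = (c : K) * z := fun c z => by
    rw [IntermediateField.smul_def, smul_eq_mul]
  have hli : LinearIndependent (kSq k K) ![(1 : K), g] := by
    rw [LinearIndependent.pair_iff]
    intro s t hst
    rw [hsm, hsm, mul_one] at hst
    by_cases ht : t = 0
    · subst ht
      simp only [ZeroMemClass.coe_zero, zero_mul, add_zero] at hst
      exact ⟨by exact_mod_cast hst, rfl⟩
    · exfalso
      apply hg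
      have htK : (t : K) ≠ 0 := fun hh => ht (by exact_mod_cast hh)
      have hgk : g = -(s : K) / (t : K) := by
        rw [eq_div_iff htK]
        linear_combination hst
      rw [hgk]
      exact div_mem (neg_mem s.2) t.2
  have hcard : Fintype.card (Fin 2) = Module.finrank (kSq k K) K := by simp [hdeg]
  let B := basisOfLinearIndependentOfCardEqFinrank hli hcard
  have hB : ⇑B = ![(1 : K), g] := coe_basisOfLinearIndependentOfCardEqFinrank hli hcard
  refine ⟨(B.repr y 0 : K), (B.repr y 1 : K), SetLike.coe_mem _, SetLike.coe_mem _, ?_⟩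
  have hsum := (B.sum_repr y).symm
  rw [Fin.sum_univ_two] at hsum
  conv_lhs => rw [hsum]
  rw [hsm, hsm, hB]
  simp

/-- If `s • dg = 0` in `Ω[K⁄k]` with `g ∉ k(K²)`, then `s = 0`.  Proved by
constructing the derivation `d/dg` by hand. -/
lemma SYaux.smul_D_eq_zero_imp [CharP K 2] (hdeg : Module.finrank (kSq k K) K = 2)
    {g : K} (hg : g ∉ kSq k K) {s : K}
    (h : s • (KaehlerDifferential.D k K g : Ω[K⁄k]) = 0) : s = 0 := by
  haveI : FiniteDimensional (kSq k K) K :=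
    FiniteDimensional.of_finrank_pos (by rw [hdeg]; norm_num)
  have hsm : ∀ (c : kSq k K) (z : K), c • z = (c : K) * z := fun c z => by
    rw [IntermediateField.smul_def, smul_eq_mul]
  have hli : LinearIndependent (kSq k K) ![(1 : K), g] := by
    rw [LinearIndependent.pair_iff]
    intro s t hst
    rw [hsm, hsm, mul_one] at hst
    by_cases ht : t = 0
    · subst ht
      simp only [ZeroMemClass.coe_zero, zero_mul, add_zero] at hst
      exact ⟨by exact_mod_cast hst, rfl⟩
    · exfalso
      apply hg
      have htK : (t : K) ≠ 0 := fun hh => ht (by exact_mod_cast hh)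
      have hgk : g = -(s : K) / (t : K) := by
        rw [eq_div_iff htK]
        linear_combination hst
      rw [hgk]
      exact div_mem (neg_mem s.2) t.2
  have hcard : Fintype.card (Fin 2) = Module.finrank (kSq k K) K := by simp [hdeg]
  let B := basisOfLinearIndependentOfCardEqFinrank hli hcard
  have hB : ⇑B = ![(1 : K), g] := coe_basisOfLinearIndependentOfCardEqFinrank hli hcard
  have hdec : ∀ y : K, ∃ a b : kSq k K, y = (a : K) + (b : K) * g := by
    intro y
    refine ⟨B.repr y 0, B.repr y 1, ?_⟩
    have hsum := (B.sum_repr y).symm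
    rw [Fin.sum_univ_two] at hsum
    conv_lhs => rw [hsum]
    rw [hsm, hsm, hB]
    simp
  have hkey : ∀ a b : kSq k K, B.repr ((a : K) + (b : K) * g) 1 = b := by
    intro a b
    have hab : ((a : K) + (b : K) * g) = a • B 0 + b • B 1 := by
      rw [hsm, hsm, hB]; simp
    rw [hab, map_add, map_smul, map_smul, B.repr_self, B.repr_self]
    simp
  let coord : K →ₗ[k] (kSq k K) := (B.coord 1).restrictScalars k
  let Dlin : K →ₗ[k] K := ((kSq k K).val.toLinearMap).comp coord
  have hDlin : ∀ a b : kSq k K, Dlin ((a : K) + (b : K) * g) = (b : K) := by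
    intro a b
    show ((kSq k K).val) ((B.coord 1) ((a : K) + (b : K) * g)) = (b : K)
    rw [Module.Basis.coord_apply, hkey]
    rfl
  have g2mem : g ^ 2 ∈ kSq k K := SYaux.sq_mem_kSq g
  have htwo : (2 : K) = 0 := CharTwo.two_eq_zero
  let D : Derivation k K K :=
    { toLinearMap := Dlin
      map_one_eq_zero' := by
        show Dlin 1 = 0
        have h1 : (1 : K) = ((1 : kSq k K) : K) + ((0 : kSq k K) : K) * g := by simp
        rw [h1, hDlin]; simp
      leibniz' := by
        intro y z
        show Dlin (y * z) = y • Dlin z + z • Dlin y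
        obtain ⟨a, b, hy⟩ := hdec y
        obtain ⟨c, d, hz⟩ := hdec z
        have hyz : y * z = ((a * c + b * d * ⟨g ^ 2, g2mem⟩ : kSq k K) : K)
            + ((a * d + b * c : kSq k K) : K) * g := by
          rw [hy, hz]; push_cast; ring
        rw [hyz, hDlin, hy, hz, hDlin, hDlin, smul_eq_mul, smul_eq_mul]
        push_cast
        linear_combination (-(b : K) * (d : K) * g) * htwo }
  have hlift := congrArg (D.liftKaehlerDifferential) h
  rw [map_smul, Derivation.liftKaehlerDifferential_comp_D, map_zero] at hlift
  have hDg : D g = 1 := by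
    show Dlin g = 1
    have hgg : g = ((0 : kSq k K) : K) + ((1 : kSq k K) : K) * g := by simp
    conv_lhs => rw [hgg]
    rw [hDlin]; rfl
  rw [hDg, smul_eq_mul, mul_one] at hlift
  exact hlift

lemma SYaux.coeff_sum_expand {m : ℕ} (hm : 0 < m) (R : Fin m → Polynomial k)
    (h : ∑ i : Fin m, (Polynomial.expand k m (R i)) * Polynomial.X ^ (i : ℕ) = 0) :
    ∀ i, R i = 0 := by
  intro i0
  ext j
  have hco := congrArg (fun p => Polynomial.coeff p (j * m + (i0 : ℕ))) h
  simp only [Polynomial.finset_sum_coeff, Polynomial.coeff_zero] at hco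
  rw [Finset.sum_eq_single i0] at hco
  · rw [Polynomial.coeff_mul_X_pow'] at hco
    have h1 : (i0 : ℕ) ≤ j * m + (i0 : ℕ) := le_add_self
    rw [if_pos h1] at hco
    have h2 : j * m + (i0 : ℕ) - (i0 : ℕ) = j * m := by omega
    rw [h2, Polynomial.coeff_expand hm, if_pos (dvd_mul_left m j),
      Nat.mul_div_cancel j hm] at hco
    simpa using hco
  · intro i _ hne
    rw [Polynomial.coeff_mul_X_pow']
    by_cases hle : (i : ℕ) ≤ j * m + (i0 : ℕ)
    · have hii : (i : ℕ) ≠ (i0 : ℕ) := fun hh => hne (Fin.ext hh)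
      have hnd : ¬ m ∣ j * m + (i0 : ℕ) - (i : ℕ) := by
        intro hdvd
        rcases le_or_gt (i : ℕ) (i0 : ℕ) with hle2 | hlt2
        · have heq : j * m + (i0 : ℕ) - (i : ℕ) = j * m + ((i0 : ℕ) - (i : ℕ)) := by omega
          rw [heq] at hdvd
          have hd2 := (Nat.dvd_add_right (dvd_mul_left m j)).mp hdvd
          have hlt : (i0 : ℕ) - (i : ℕ) < m := by have := i0.isLt; omega
          have hpos : 0 < (i0 : ℕ) - (i : ℕ) := by omega
          exact absurd (Nat.le_of_dvd hpos hd2) (by omega)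
        · have hj : 1 ≤ j := by
            by_contra hj0
            have hj' : j = 0 := by omega
            subst hj'
            have := i.isLt
            omega
          have hjm : (j - 1) * m = j * m - m := by
            cases j with
            | zero => omega
            | succ n => simp [Nat.succ_sub_one, Nat.succ_mul]
          have heq : j * m + (i0 : ℕ) - (i : ℕ)
              = (j - 1) * m + (m - ((i : ℕ) - (i0 : ℕ))) := by
            have hi := i.isLt
            have hmm : m ≤ j * m := by
              calc m = 1 * m := (one_mul m).symm
              _ ≤ j * m := Nat.mul_le_mul_right m hj
            omega
          rw [heq] at hdvd
          have hd2 := (Nat.dvd_add_right (dvd_mul_left m (j - 1))).mp hdvd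
          have hi := i.isLt
          have hpos : 0 < m - ((i : ℕ) - (i0 : ℕ)) := by omega
          exact absurd (Nat.le_of_dvd hpos hd2) (by omega)
      rw [if_pos hle, Polynomial.coeff_expand hm, if_neg hnd]
    · rw [if_neg hle]
  · intro hni; exact absurd (Finset.mem_univ i0) hni

lemma SYaux.pow_linearIndependent {x : K}
    (htx : Transcendental k x) {m : ℕ} (hm : 0 < m) :
    LinearIndependent (IntermediateField.adjoin k {x ^ m}) (fun j : Fin m => x ^ (j : ℕ)) := by
  rw [Fintype.linearIndependent_iff]
  intro c hc i0
  have hrep : ∀ i : Fin m, ∃ P Q : Polynomial k,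
      (Polynomial.aeval (x ^ m)) Q ≠ 0 ∧
        (c i : K) * (Polynomial.aeval (x ^ m)) Q = (Polynomial.aeval (x ^ m)) P := by
    intro i
    by_cases hci : c i = 0
    · exact ⟨0, 1, by simp, by simp [hci]⟩
    · obtain ⟨r, s, hrs⟩ := (IntermediateField.mem_adjoin_simple_iff k _).mp (c i).2
      by_cases hsu : (Polynomial.aeval (x ^ m)) s = 0
      · exfalso; apply hci
        have h0 : (c i : K) = 0 := by rw [hrs, hsu, div_zero]
        exact Subtype.ext h0
      · exact ⟨r, s, hsu, by rw [hrs]; field_simp⟩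
  choose P Q hQ hPQ using hrep
  set R : Fin m → Polynomial k := fun i => P i * ∏ j ∈ Finset.univ.erase i, Q j with hR
  have hZ : ∑ i : Fin m, (Polynomial.expand k m (R i)) * Polynomial.X ^ (i : ℕ) = 0 := by
    rw [transcendental_iff] at htx
    apply htx
    rw [map_sum]
    have heach : ∀ i : Fin m,
        (Polynomial.aeval x) ((Polynomial.expand k m (R i)) * Polynomial.X ^ (i : ℕ))
        = ((c i : K) * x ^ (i : ℕ)) * ∏ j : Fin m, (Polynomial.aeval (x ^ m)) (Q j) := by
      intro i
      rw [map_mul, Polynomial.expand_aeval, map_pow, Polynomial.aeval_X, hR]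
      simp only [map_mul, map_prod]
      rw [← hPQ i, ← Finset.mul_prod_erase Finset.univ
        (fun j => (Polynomial.aeval (x ^ m)) (Q j)) (Finset.mem_univ i)]
      ring
    rw [Finset.sum_congr rfl (fun i _ => heach i), ← Finset.sum_mul]
    have hc' : ∑ i : Fin m, (c i : K) * x ^ (i : ℕ) = 0 := by
      rw [← hc]
      exact Finset.sum_congr rfl (fun i _ => by rw [IntermediateField.smul_def, smul_eq_mul])
    rw [hc', zero_mul]
  have hR0 := SYaux.coeff_sum_expand hm R hZ i0
  rw [hR] at hR0
  simp only at hR0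
  rcases mul_eq_zero.mp hR0 with hP | hQ0
  · have hpq := hPQ i0
    rw [hP, map_zero] at hpq
    have hc0 : (c i0 : K) = 0 :=
      (mul_eq_zero.mp hpq).resolve_right (hQ i0)
    exact Subtype.ext hc0
  · exfalso
    rcases (Finset.prod_eq_zero_iff.mp hQ0) with ⟨j, _, hQj⟩
    exact hQ j (by rw [hQj, map_zero])

noncomputable def SYaux.powPre [CharP K 2] (E : IntermediateField k K) (n : ℕ) :
    IntermediateField k K :=
  (E.toSubfield.comap (iterateFrobenius K 2 n)).toIntermediateField (fun c => by
    have h : iterateFrobenius K 2 n (algebraMap k K c) = algebraMap k K (c ^ 2 ^ n) := by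
      rw [iterateFrobenius_def, map_pow]
    simp only [Subfield.mem_comap, h]
    exact E.algebraMap_mem _)

lemma SYaux.mem_powPre [CharP K 2] {E : IntermediateField k K} {n : ℕ} {a : K} :
    a ∈ SYaux.powPre E n ↔ a ^ 2 ^ n ∈ E := by
  change a ∈ E.toSubfield.comap (iterateFrobenius K 2 n) ↔ _
  rw [Subfield.mem_comap, iterateFrobenius_def]; rfl

noncomputable def SYaux.Fn (k K : Type*) [Field k] [Field K] [Algebra k K] (n : ℕ) :
    IntermediateField k K :=
  IntermediateField.adjoin k {z : K | ∃ y : K, z = y ^ 2 ^ n}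

lemma SYaux.sq_mem_Fn_succ [CharP K 2] {m : ℕ} {a : K} (ha : a ∈ SYaux.Fn k K m) :
    a ^ 2 ∈ SYaux.Fn k K (m + 1) := by
  have hle : SYaux.Fn k K m ≤ SYaux.powPre (SYaux.Fn k K (m + 1)) 1 := by
    rw [SYaux.Fn, IntermediateField.adjoin_le_iff]
    rintro z ⟨y, rfl⟩
    have h : (y ^ 2 ^ m) ^ 2 ^ 1 = y ^ 2 ^ (m + 1) := by
      rw [← pow_mul, pow_one, ← pow_succ]
    rw [SetLike.mem_coe, SYaux.mem_powPre, h]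
    exact IntermediateField.subset_adjoin _ _ ⟨y, rfl⟩
  have h2 := hle ha
  rw [SYaux.mem_powPre, pow_one] at h2
  exact h2

lemma SYaux.not_kSq_le_kFour [CharP K 2] (hfg : (⊤ : IntermediateField k K).FG)
    (htr : ∃ x : K, Transcendental k x ∧
      Algebra.IsAlgebraic (IntermediateField.adjoin k {x}) K) :
    ¬ (kSq k K ≤ kFour k K) := by
  classical
  intro hle
  obtain ⟨x, htx, halgx⟩ := htr
  have hkSq : kSq k K = SYaux.Fn k K 1 := by
    have hset : {z : K | ∃ y : K, z = y ^ 2 ^ 1} = {z : K | ∃ y : K, z = y ^ 2} := by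
      ext z; norm_num
    rw [kSq, SYaux.Fn, hset]
  have hkFour : kFour k K = SYaux.Fn k K 2 := by
    have hset : {z : K | ∃ y : K, z = y ^ 2 ^ 2} = {z : K | ∃ y : K, z = y ^ 4} := by
      ext z; norm_num
    rw [kFour, SYaux.Fn, hset]
  have hchain : ∀ m : ℕ, 1 ≤ m → SYaux.Fn k K m ≤ SYaux.Fn k K (m + 1) := by
    intro m
    induction m with
    | zero => omega
    | succ p ih =>
      intro _
      by_cases hp : 1 ≤ p
      · rw [SYaux.Fn, IntermediateField.adjoin_le_iff]
        rintro z ⟨y, rfl⟩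
        have h1 : y ^ 2 ^ (p + 1) = (y ^ 2 ^ p) ^ 2 := by
          rw [← pow_mul, ← pow_succ]
        rw [SetLike.mem_coe, h1]
        exact SYaux.sq_mem_Fn_succ (ih hp (IntermediateField.subset_adjoin _ _ ⟨y, rfl⟩))
      · have hp0 : p = 0 := by omega
        subst hp0
        rw [show (0 : ℕ) + 1 + 1 = 2 by rfl, ← hkSq, ← hkFour]
        exact hle
  have hmono : ∀ m : ℕ, 1 ≤ m → SYaux.Fn k K 1 ≤ SYaux.Fn k K m := by
    intro m
    induction m with
    | zero => omega
    | succ p ih =>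
      intro _
      by_cases hp : 1 ≤ p
      · exact le_trans (ih hp) (hchain p hp)
      · have hp0 : p = 0 := by omega
        subst hp0
        exact le_refl _
  haveI := halgx
  obtain ⟨S, hS⟩ := hfg
  have hSalg : ∀ z ∈ (S : Set K), IsIntegral (IntermediateField.adjoin k {x}) z := fun z _ =>
    isAlgebraic_iff_isIntegral.mp (Algebra.IsAlgebraic.isAlgebraic z)
  haveI hfd1 : FiniteDimensional (IntermediateField.adjoin k {x})
      (IntermediateField.adjoin (IntermediateField.adjoin k {x}) (S : Set K)) :=
    IntermediateField.finiteDimensional_adjoin hSalg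
  have htop : IntermediateField.adjoin (IntermediateField.adjoin k {x}) (S : Set K) = ⊤ := by
    rw [eq_top_iff]
    intro z _
    have h1 : z ∈ IntermediateField.restrictScalars k
        (IntermediateField.adjoin (IntermediateField.adjoin k {x}) (S : Set K)) := by
      rw [IntermediateField.restrictScalars_adjoin]
      have hz : z ∈ IntermediateField.adjoin k (S : Set K) := by rw [hS]; trivial
      exact IntermediateField.adjoin.mono _ _ _ Set.subset_union_right hz
    exact h1
  haveI hfdK : FiniteDimensional (IntermediateField.adjoin k {x}) K := by
    rw [htop] at hfd1
    exact (IntermediateField.topEquiv (F := (IntermediateField.adjoin k {x})) (E := K)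
      ).toLinearEquiv.finiteDimensional
  set N := Module.finrank (IntermediateField.adjoin k {x}) K with hN
  set n := N + 1 with hn
  set En := IntermediateField.adjoin k {x ^ 2 ^ n} with hEn
  have hfrob : ∀ c : K, c ∈ IntermediateField.adjoin k {x} → c ^ 2 ^ n ∈ En := by
    have hE : IntermediateField.adjoin k {x} ≤ SYaux.powPre En n := by
      rw [IntermediateField.adjoin_le_iff]
      rintro z hz
      rw [Set.mem_singleton_iff] at hz; subst hz
      rw [SetLike.mem_coe, SYaux.mem_powPre]
      exact IntermediateField.subset_adjoin _ _ rfl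
    intro c hc
    have := hE hc
    rwa [SYaux.mem_powPre] at this
  set b := Module.finBasis (IntermediateField.adjoin k {x}) K with hb
  set V : Submodule En K := Submodule.span En (Set.range fun i => (b i) ^ 2 ^ n) with hV
  have hBmem : ∀ y : K, y ^ 2 ^ n ∈ V := by
    intro y
    have hy : y ∈ Submodule.span (IntermediateField.adjoin k {x}) (Set.range b) := by
      rw [b.span_eq]; trivial
    refine Submodule.span_induction ?_ ?_ ?_ ?_ hy
    · rintro z ⟨i, rfl⟩
      exact Submodule.subset_span ⟨i, rfl⟩
    · rw [zero_pow (by positivity : (2 : ℕ) ^ n ≠ 0)]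
      exact Submodule.zero_mem V
    · intro y z _ _ hy hz
      rw [add_pow_char_pow]
      exact Submodule.add_mem V hy hz
    · intro c z _ hz
      rw [IntermediateField.smul_def, smul_eq_mul, mul_pow]
      have hc : ((c : K)) ^ 2 ^ n ∈ En := hfrob _ c.2
      have hsm : (⟨(c : K) ^ 2 ^ n, hc⟩ : En) • (z ^ 2 ^ n) = (c : K) ^ 2 ^ n * z ^ 2 ^ n := by
        rw [IntermediateField.smul_def, smul_eq_mul]
      rw [← hsm]
      exact Submodule.smul_mem V _ hz
  have h1V : (1 : K) ∈ V := by
    have := hBmem 1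
    rwa [one_pow] at this
  have hmulV : ∀ u ∈ V, ∀ v ∈ V, u * v ∈ V := by
    have hgen : ∀ w : K, (∃ i, (b i) ^ 2 ^ n = w) → ∀ u ∈ V, u * w ∈ V := by
      rintro w ⟨i, rfl⟩ u hu
      refine Submodule.span_induction ?_ ?_ ?_ ?_ hu
      · rintro z ⟨j, rfl⟩
        rw [← mul_pow]
        exact hBmem _
      · rw [zero_mul]; exact Submodule.zero_mem V
      · intro y z _ _ hy hz
        rw [add_mul]; exact Submodule.add_mem V hy hz
      · intro c z _ hz
        rw [smul_mul_assoc]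
        exact Submodule.smul_mem V _ hz
    intro u hu v hv
    refine Submodule.span_induction ?_ ?_ ?_ ?_ hv
    · rintro z hz
      exact hgen z hz u hu
    · rw [mul_zero]; exact Submodule.zero_mem V
    · intro y z _ _ hy hz
      rw [mul_add]; exact Submodule.add_mem V hy hz
    · intro c z _ hz
      rw [mul_smul_comm]
      exact Submodule.smul_mem V _ hz
  haveI hVfd : FiniteDimensional En V :=
    FiniteDimensional.span_of_finite En (Set.finite_range _)
  have hinv : ∀ u : K, u ∈ V → u ≠ 0 → u⁻¹ ∈ V := by
    intro u hu hu0
    let mulu : V →ₗ[En] V :=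
      { toFun := fun w => ⟨u * (w : K), hmulV u hu _ w.2⟩
        map_add' := fun w1 w2 => by
          apply Subtype.ext; simp [mul_add]
        map_smul' := fun c w => by
          apply Subtype.ext
          simp only [RingHom.id_apply, SetLike.val_smul, IntermediateField.smul_def, smul_eq_mul]
          ring }
    have hinj : Function.Injective mulu := by
      intro w1 w2 h12
      have h3 : u * (w1 : K) = u * (w2 : K) := congrArg Subtype.val h12
      exact Subtype.ext (mul_left_cancel₀ hu0 h3)
    have hsurj := (LinearMap.injective_iff_surjective).mp hinj
    obtain ⟨w, hw⟩ := hsurj ⟨1, h1V⟩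
    have hw1 : u * (w : K) = 1 := congrArg Subtype.val hw
    rw [← eq_inv_of_mul_eq_one_right hw1]
    exact w.2
  let VA : Subalgebra En K := Submodule.toSubalgebra V h1V (fun a b ha hb => hmulV a ha b hb)
  let VIF : IntermediateField k K :=
    Subalgebra.toIntermediateField (VA.restrictScalars k) (fun z hz => by
      by_cases h : z = 0
      · rw [h, inv_zero]; exact Submodule.zero_mem V
      · exact hinv z hz h)
  have hmemVIF : ∀ z : K, z ∈ VIF ↔ z ∈ V := fun z => Iff.rfl
  have hFnV : SYaux.Fn k K n ≤ VIF := by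
    rw [SYaux.Fn, IntermediateField.adjoin_le_iff]
    rintro z ⟨y, rfl⟩
    exact (hmemVIF _).mpr (hBmem y)
  have hx2 : x ^ 2 ∈ V := by
    have h1 : x ^ 2 ∈ SYaux.Fn k K 1 := IntermediateField.subset_adjoin _ _ ⟨x, by norm_num⟩
    exact (hmemVIF _).mp (hFnV (hmono n (by omega) h1))
  have hpows : ∀ i : ℕ, (x ^ 2) ^ i ∈ V := by
    intro i
    induction i with
    | zero => simpa using h1V
    | succ j ih => rw [pow_succ]; exact hmulV _ ih _ hx2
  have hliKfull := SYaux.pow_linearIndependent (k := k) htx (m := 2 ^ n) (by positivity)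
  have h2i : ∀ i : Fin (N + 1), 2 * (i : ℕ) < 2 ^ n := by
    intro i
    have hi : (i : ℕ) ≤ N := Nat.lt_succ_iff.mp i.isLt
    have h2 : N < 2 ^ N := Nat.lt_two_pow_self
    calc 2 * (i : ℕ) ≤ 2 * N := by omega
    _ < 2 * 2 ^ N := by omega
    _ = 2 ^ n := by rw [hn, pow_succ]; ring
  let emb : Fin (N + 1) → Fin (2 ^ n) := fun i => ⟨2 * (i : ℕ), h2i i⟩
  have hembinj : Function.Injective emb := by
    intro i j hij
    have h3 : 2 * (i : ℕ) = 2 * (j : ℕ) := congrArg Fin.val hij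
    exact Fin.ext (by omega)
  have hliK : LinearIndependent En (fun i : Fin (N + 1) => x ^ (2 * (i : ℕ))) := by
    have h4 := hliKfull.comp emb hembinj
    convert h4 using 1
    rfl
  let vv : Fin (N + 1) → V := fun i => ⟨x ^ (2 * (i : ℕ)), by rw [pow_mul]; exact hpows _⟩
  have hlv : LinearIndependent En vv := by
    apply LinearIndependent.of_comp V.subtype
    convert hliK using 1
    rfl
  have hcard := hlv.fintype_card_le_finrank
  have hfinrank : Module.finrank En V ≤ N := by
    have heq : (Set.range fun i => (b i) ^ 2 ^ n)
        = ((Finset.univ.image (fun i => (b i) ^ 2 ^ n) : Finset K) : Set K) := by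
      simp
    have h5 := finrank_span_finset_le_card (R := En)
      (Finset.univ.image (fun i => (b i) ^ 2 ^ n))
    have h6 : Module.finrank En V
        = Set.finrank En ((Finset.univ.image (fun i => (b i) ^ 2 ^ n) : Finset K) : Set K) := by
      rw [hV, Set.finrank, heq]
    rw [h6]
    refine le_trans h5 ?_
    refine le_trans (Finset.card_image_le) ?_
    simp
    exact hN.symm.le
  simp only [Fintype.card_fin] at hcard
  omega

lemma SYaux.dep_imp [CharP K 2] {g : K} {c0 c1 c2 c3 : K}
    (h0 : c0 ∈ kFour k K) (h1 : c1 ∈ kFour k K) (h2 : c2 ∈ kFour k K) (h3 : c3 ∈ kFour k K)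
    (heq : c0 + c1 * g + c2 * g ^ 2 + c3 * g ^ 3 = 0)
    (hne : ¬(c0 = 0 ∧ c1 = 0 ∧ c2 = 0 ∧ c3 = 0)) :
    g ^ 2 ∈ kFour k K ∨ g ∈ kFour k K := by
  haveI : CharP (Polynomial K) 2 := by
    constructor
    intro a
    rw [← Polynomial.C_eq_natCast, ← CharP.cast_eq_zero_iff K 2 a, Polynomial.C_eq_zero]
  have htwoP : (2 : Polynomial K) = 0 := CharTwo.two_eq_zero
  set F := kFour k K with hF
  set p : Polynomial F := Polynomial.C (⟨c0, h0⟩ : F) + Polynomial.C (⟨c1, h1⟩ : F) * Polynomial.X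
      + Polynomial.C (⟨c2, h2⟩ : F) * Polynomial.X ^ 2
      + Polynomial.C (⟨c3, h3⟩ : F) * Polynomial.X ^ 3 with hp
  have hc0 : p.coeff 0 = ⟨c0, h0⟩ := by rw [hp]; simp
  have hc1 : p.coeff 1 = ⟨c1, h1⟩ := by rw [hp]; simp
  have hc2 : p.coeff 2 = ⟨c2, h2⟩ := by rw [hp]; simp
  have hc3 : p.coeff 3 = ⟨c3, h3⟩ := by rw [hp]; simp
  have hp0 : p ≠ 0 := by
    intro hz
    apply hne
    rw [hz] at hc0 hc1 hc2 hc3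
    simp only [Polynomial.coeff_zero] at hc0 hc1 hc2 hc3
    exact ⟨by simpa using congrArg Subtype.val hc0.symm,
      by simpa using congrArg Subtype.val hc1.symm,
      by simpa using congrArg Subtype.val hc2.symm,
      by simpa using congrArg Subtype.val hc3.symm⟩
  have haev : Polynomial.aeval g p = 0 := by
    rw [hp]
    simp only [map_add, map_mul, map_pow, Polynomial.aeval_C, Polynomial.aeval_X]
    exact heq
  have hint : IsIntegral F g := by
    refine ⟨Polynomial.X ^ 4 - Polynomial.C (⟨g ^ 4, SYaux.pow4_mem_kFour g⟩ : F),
      Polynomial.monic_X_pow_sub_C _ (by norm_num), ?_⟩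
    rw [Polynomial.eval₂_sub, Polynomial.eval₂_pow, Polynomial.eval₂_X, Polynomial.eval₂_C]
    exact sub_self _
  have haevq : Polynomial.aeval g
      (Polynomial.X ^ 4 - Polynomial.C (⟨g ^ 4, SYaux.pow4_mem_kFour g⟩ : F)) = 0 := by
    rw [map_sub, map_pow, Polynomial.aeval_X, Polynomial.aeval_C]
    exact sub_self _
  set m := minpoly F g with hm
  have hmdvd : m ∣ p := minpoly.dvd F g haev
  have hdeg3 : m.natDegree ≤ 3 := by
    refine le_trans (Polynomial.natDegree_le_of_dvd hmdvd hp0) ?_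
    rw [hp]
    compute_degree
  have hmdvdq := minpoly.dvd F g haevq
  set M := m.map (algebraMap F K) with hM
  have hMdvd : M ∣ (Polynomial.X ^ 4 - Polynomial.C (g ^ 4) : Polynomial K) := by
    have hh := Polynomial.map_dvd (algebraMap F K) hmdvdq
    rwa [Polynomial.map_sub, Polynomial.map_pow, Polynomial.map_X, Polynomial.map_C] at hh
  have hsq2 : ((Polynomial.X - Polynomial.C g : Polynomial K)) ^ 2
      = Polynomial.X ^ 2 - Polynomial.C (g ^ 2) := by
    rw [map_pow]
    linear_combination (-(Polynomial.C g) * Polynomial.X + (Polynomial.C g) ^ 2) * htwoP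
  have hpow4 : ((Polynomial.X - Polynomial.C g) ^ 4 : Polynomial K)
      = Polynomial.X ^ 4 - Polynomial.C (g ^ 4) := by
    have h4 : ((Polynomial.X - Polynomial.C g : Polynomial K)) ^ 4
        = (((Polynomial.X - Polynomial.C g)) ^ 2) ^ 2 := by ring
    have hc4 : (Polynomial.C (g ^ 4) : Polynomial K) = (Polynomial.C (g ^ 2)) ^ 2 := by
      rw [← map_pow]; congr 1; ring
    rw [h4, hsq2, hc4]
    linear_combination (-(Polynomial.C (g ^ 2)) * Polynomial.X ^ 2
      + (Polynomial.C (g ^ 2)) ^ 2) * htwoP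
  have hMdvd4 : M ∣ (Polynomial.X - Polynomial.C g) ^ 4 := by rw [hpow4]; exact hMdvd
  obtain ⟨i, hi4, hassoc⟩ := (dvd_prime_pow (Polynomial.prime_X_sub_C g) 4).mp hMdvd4
  have hMonic : M.Monic := (minpoly.monic hint).map _
  have hMeq : M = (Polynomial.X - Polynomial.C g) ^ i :=
    Polynomial.eq_of_monic_of_associated hMonic ((Polynomial.monic_X_sub_C g).pow _) hassoc
  have hMdeg : M.natDegree = m.natDegree :=
    Polynomial.natDegree_map_eq_of_injective (algebraMap F K).injective m
  have hideg : i = m.natDegree := by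
    rw [← hMdeg, hMeq, Polynomial.natDegree_pow, Polynomial.natDegree_X_sub_C, mul_one]
  have hi1 : 1 ≤ i := by
    rw [hideg]
    exact minpoly.natDegree_pos hint
  have hi3 : i ≤ 3 := by omega
  have hcoefM : ∀ j, M.coeff j ∈ F := by
    intro j
    rw [hM, Polynomial.coeff_map]
    exact ((m.coeff j) : F).2
  interval_cases i
  · right
    have h := hcoefM 0
    rw [hMeq, pow_one] at h
    simp only [Polynomial.coeff_sub, Polynomial.coeff_X_zero, Polynomial.coeff_C_zero,
      zero_sub] at h
    simpa using neg_mem h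
  · left
    have h := hcoefM 0
    rw [hMeq, hsq2] at h
    simp only [Polynomial.coeff_sub, Polynomial.coeff_X_pow, Polynomial.coeff_C_zero,
      zero_sub] at h
    simpa using neg_mem h
  · right
    have hexp : ((Polynomial.X - Polynomial.C g : Polynomial K)) ^ 3
        = Polynomial.X ^ 3 - Polynomial.C g * Polynomial.X ^ 2
          - Polynomial.C (g ^ 2) * Polynomial.X + Polynomial.C (g ^ 2) * Polynomial.C g := by
      rw [show (3 : ℕ) = 2 + 1 from rfl, pow_succ, hsq2]
      ring
    have h := hcoefM 2
    rw [hMeq, hexp] at h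
    simp only [Polynomial.coeff_add, Polynomial.coeff_sub, Polynomial.coeff_X_pow,
      Polynomial.coeff_C_mul, Polynomial.coeff_X, Polynomial.coeff_C] at h
    norm_num at h
    simpa using neg_mem h

lemma SYaux.sq_kSq_mem_kFour [CharP K 2] {a : K} (ha : a ∈ kSq k K) :
    a ^ 2 ∈ kFour k K := by
  have hle : kSq k K ≤ SYaux.powPre (kFour k K) 1 := by
    rw [kSq, IntermediateField.adjoin_le_iff]
    rintro z ⟨y, rfl⟩
    rw [SetLike.mem_coe, SYaux.mem_powPre]
    have h : (y ^ 2) ^ 2 ^ 1 = y ^ 4 := by ring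
    rw [h]
    exact SYaux.pow4_mem_kFour y
  have h2 := hle ha
  rwa [SYaux.mem_powPre, pow_one] at h2

lemma SYaux.kSq_le_kFour_of_gsq [CharP K 2] (hdeg : Module.finrank (kSq k K) K = 2)
    {g : K} (hg : g ∉ kSq k K) (hg2 : g ^ 2 ∈ kFour k K) : kSq k K ≤ kFour k K := by
  have htwoK : (2 : K) = 0 := CharTwo.two_eq_zero
  have hgen : {x : K | ∃ y : K, x = y ^ 2} ⊆ (kFour k K : Set K) := by
    rintro z ⟨y, rfl⟩
    obtain ⟨a, b, haS, hbS, hy⟩ := SYaux.span_one_g hdeg hg y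
    have hsq : y ^ 2 = a ^ 2 + b ^ 2 * g ^ 2 := by
      rw [hy]; linear_combination (a * b * g) * htwoK
    rw [SetLike.mem_coe, hsq]
    exact add_mem (SYaux.sq_kSq_mem_kFour haS) (mul_mem (SYaux.sq_kSq_mem_kFour hbS) hg2)
  rw [kSq, IntermediateField.adjoin_le_iff]
  exact hgen

lemma SYaux.indep_four [CharP K 2] (hfg : (⊤ : IntermediateField k K).FG)
    (htr : ∃ x : K, Transcendental k x ∧
      Algebra.IsAlgebraic (IntermediateField.adjoin k {x}) K)
    (hdeg : Module.finrank (kSq k K) K = 2)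
    {g : K} (hg : g ∉ kSq k K)
    {c0 c1 c2 c3 : K}
    (h0 : c0 ∈ kFour k K) (h1 : c1 ∈ kFour k K) (h2 : c2 ∈ kFour k K) (h3 : c3 ∈ kFour k K)
    (heq : c0 + c1 * g + c2 * g ^ 2 + c3 * g ^ 3 = 0) :
    c0 = 0 ∧ c1 = 0 ∧ c2 = 0 ∧ c3 = 0 := by
  by_contra hne
  rcases SYaux.dep_imp h0 h1 h2 h3 heq hne with h | h
  · exact SYaux.not_kSq_le_kFour hfg htr (SYaux.kSq_le_kFour_of_gsq hdeg hg h)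
  · exact hg (SYaux.kFour_le_kSq h)

end SYAux

/-- **Vanishing of the Sugiyama–Yasuda symbol** (Corollary 4.5 / Theorem 4.8(b) of
Kedlaya–Litt–Witaszek): for `f, g ∈ R = K \ k(K²)`, `SY(f, g) = 0` in `Ω[K⁄k]` if
and only if `g = (αf + β)/(γf + δ)` for some `α, β, γ, δ ∈ k(K⁴)` with `αδ + βγ ≠ 0`,
i.e. exactly when `f` and `g` lie in the same orbit under `Γ = PGL₂(k^{1/4}·K)`. -/
theorem SY_symbol_eq_zero_iff_sameOrbit
    (k K : Type*) [Field k] [CharP k 2] [Field K] [Algebra k K]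
    (hfg : (⊤ : IntermediateField k K).FG)
    (htr : ∃ x : K, Transcendental k x ∧
      Algebra.IsAlgebraic (IntermediateField.adjoin k {x}) K)
    (halg : ∀ x : K, IsAlgebraic k x → x ∈ (algebraMap k K).range)
    (hdeg : Module.finrank (kSq k K) K = 2)
    (L : Type*) [Field L] (ι : K →+* L)
    (hLperf : ∀ x : L, ∃ y : L, y ^ 2 = x)
    (hLinsep : ∀ x : L, ∃ n : ℕ, x ^ 2 ^ n ∈ Set.range ι)
    (f g : K) (hf : f ∉ kSq k K) (hg : g ∉ kSq k K)
    (s : K) (hs : SYWitness k K L ι f g s) :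
    s • (KaehlerDifferential.D k K g : Ω[K⁄k]) = 0 ↔
      ∃ α β γ δ : K, α ∈ kFour k K ∧ β ∈ kFour k K ∧ γ ∈ kFour k K ∧ δ ∈ kFour k K ∧
        α * δ + β * γ ≠ 0 ∧ g = (α * f + β) / (γ * f + δ) := by
    classical
  haveI hK2 : CharP K 2 := charP_of_injective_algebraMap (algebraMap k K).injective 2
  haveI hL2 : CharP L 2 := charP_of_injective_ringHom ι.injective 2
  have htwoK : (2 : K) = 0 := CharTwo.two_eq_zero
  have htwoL : (2 : L) = 0 := CharTwo.two_eq_zero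
  obtain ⟨f0, f1, f2, f3, hm0, hm1, hm2, hm3, hfexp, hden, hsval⟩ := hs
  obtain ⟨b0, hb0F, hb0⟩ := hm0
  obtain ⟨b1, hb1F, hb1⟩ := hm1
  obtain ⟨b2, hb2F, hb2⟩ := hm2
  obtain ⟨b3, hb3F, hb3⟩ := hm3
  have hfK : f = b0 + b1 * g + b2 * g ^ 2 + b3 * g ^ 3 := by
    apply ι.injective
    rw [map_add, map_add, map_add, map_mul, map_mul, map_mul, map_pow, map_pow,
      hb0, hb1, hb2, hb3, hfexp]
  -- `s = 0` iff `b2 ^ 2 = b1 * b3`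
  have hs0iff : s = 0 ↔ b2 ^ 2 = b1 * b3 := by
    constructor
    · intro hs0
      have hιs : ι s = 0 := by rw [hs0, map_zero]
      rw [hsval] at hιs
      have hdiv : (f1 * f3 + f2 ^ 2) / (f1 ^ 2 + f3 ^ 2 * ι g) = 0 :=
        pow_eq_zero_iff (two_ne_zero (α := ℕ)) |>.mp hιs
      have hN : f1 * f3 + f2 ^ 2 = 0 :=
        (div_eq_zero_iff.mp hdiv).resolve_right hden
      have hL4 : (f2 ^ 4) ^ 2 = f1 ^ 4 * f3 ^ 4 := by
        linear_combination (f2 ^ 6 - f2 ^ 4 * (f1 * f3) + f2 ^ 2 * (f1 * f3) ^ 2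
          - (f1 * f3) ^ 3) * hN
      apply ι.injective
      rw [map_pow, map_mul, hb1, hb2, hb3]
      exact hL4
    · intro hbb
      have hL4 : (f2 ^ 4) ^ 2 = f1 ^ 4 * f3 ^ 4 := by
        rw [← hb1, ← hb2, ← hb3, ← map_pow, ← map_mul, hbb]
      have hN4 : (f1 * f3 + f2 ^ 2) ^ 4 = 0 := by
        linear_combination (-(1 : L)) * hL4 + ((f1 * f3) ^ 4 + 2 * (f1 * f3) ^ 3 * f2 ^ 2
          + 3 * (f1 * f3) ^ 2 * f2 ^ 4 + 2 * (f1 * f3) * f2 ^ 6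
          + f2 ^ 8 - f1 ^ 4 * f3 ^ 4) * htwoL
      have hN : f1 * f3 + f2 ^ 2 = 0 :=
        pow_eq_zero_iff (by norm_num : (4 : ℕ) ≠ 0) |>.mp hN4
      apply ι.injective
      rw [hsval, hN, zero_div, map_zero]
      norm_num
  constructor
  · -- forward direction
    intro hzero
    have hs0 : s = 0 := SYaux.smul_D_eq_zero_imp hdeg hg hzero
    have hbb := hs0iff.mp hs0
    by_cases hb3z : b3 = 0
    · -- b3 = 0, hence b2 = 0 and b1 ≠ 0
      have hf3 : f3 = 0 := by
        have h4 : f3 ^ 4 = 0 := by rw [← hb3, hb3z, map_zero]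
        exact pow_eq_zero_iff (by norm_num : (4 : ℕ) ≠ 0) |>.mp h4
      have hb2z : b2 = 0 := by
        have h2 : b2 ^ 2 = 0 := by rw [hbb, hb3z, mul_zero]
        exact pow_eq_zero_iff (two_ne_zero (α := ℕ)) |>.mp h2
      have hb1z : b1 ≠ 0 := by
        intro h1z
        apply hden
        have hf1 : f1 = 0 := by
          have h4 : f1 ^ 4 = 0 := by rw [← hb1, h1z, map_zero]
          exact pow_eq_zero_iff (by norm_num : (4 : ℕ) ≠ 0) |>.mp h4
        rw [hf1, hf3]
        ring
      refine ⟨1, b0, 0, b1, one_mem _, hb0F, zero_mem _, hb1F, ?_, ?_⟩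
      · rw [one_mul, mul_zero, add_zero]; exact hb1z
      · rw [zero_mul, zero_add, one_mul, eq_div_iff hb1z]
        rw [hfK, hb2z, hb3z]
        linear_combination (b0 : K) * htwoK + (-2 * b0) * htwoK
    · -- b3 ≠ 0
      set α := b2 with hα
      set β := b0 * b2 + b3 ^ 2 * g ^ 4 with hβ
      set γ := b3 with hγ
      set δ := b1 * b2 + b0 * b3 with hδ
      have hβF : β ∈ kFour k K :=
        add_mem (mul_mem hb0F hb2F) (mul_mem (pow_mem hb3F 2) (SYaux.pow4_mem_kFour g))
      have hδF : δ ∈ kFour k K := add_mem (mul_mem hb1F hb2F) (mul_mem hb0F hb3F)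
      have hdet : α * δ + β * γ = b3 * (b1 ^ 2 + b3 ^ 2 * g ^ 4) := by
        rw [hα, hβ, hγ, hδ]
        linear_combination b1 * hbb + (b0 * b2 * b3) * htwoK
      have hfac : b1 ^ 2 + b3 ^ 2 * g ^ 4 ≠ 0 := by
        intro hz
        apply hden
        have hι : ι (b1 ^ 2 + b3 ^ 2 * g ^ 4) = (f1 ^ 2 + f3 ^ 2 * ι g) ^ 4 := by
          rw [map_add, map_mul, map_pow, map_pow, hb1, hb3, map_pow]
          linear_combination (2 * (f1 ^ 2) ^ 3 * (f3 ^ 2 * ι g)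
            + 3 * (f1 ^ 2) ^ 2 * (f3 ^ 2 * ι g) ^ 2 + 2 * (f1 ^ 2) * (f3 ^ 2 * ι g) ^ 3
            - 4 * f1 ^ 2 * f3 ^ 6 * (ι g) ^ 3 - 6 * f1 ^ 4 * f3 ^ 4 * (ι g) ^ 2
            - 4 * f1 ^ 6 * f3 ^ 2 * (ι g)) * htwoL
        have h0 : (f1 ^ 2 + f3 ^ 2 * ι g) ^ 4 = 0 := by rw [← hι, hz, map_zero]
        exact pow_eq_zero_iff (by norm_num : (4 : ℕ) ≠ 0) |>.mp h0
      have hdetne : α * δ + β * γ ≠ 0 := by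
        rw [hdet]
        exact mul_ne_zero hb3z hfac
      have hgmul : g * (γ * f + δ) = α * f + β := by
        rw [hα, hβ, hγ, hδ]
        linear_combination (g * b3 - b2) * hfK + (-(g ^ 2)) * hbb
          + (b0 * b3 * g - b0 * b2) * htwoK
      have hdenne : γ * f + δ ≠ 0 := by
        intro hz
        apply hdetne
        have hαβ : α * f + β = 0 := by rw [← hgmul, hz, mul_zero]
        linear_combination α * hz + γ * hαβ + (- α * γ * f) * htwoK
      exact ⟨α, β, γ, δ, hb2F, hβF, hb3F, hδF, hdetne, by rw [eq_div_iff hdenne]; exact hgmul⟩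
  · -- backward direction
    rintro ⟨α, β, γ, δ, hαF, hβF, hγF, hδF, hdet, hgeq⟩
    have hgfδ : γ * f + δ ≠ 0 := by
      intro hzz
      rw [hzz, div_zero] at hgeq
      rw [hgeq] at hg
      exact hg (zero_mem _)
    have hcross : g * (γ * f + δ) = α * f + β := by
      rw [hgeq]; field_simp
      exact mul_div_cancel_right₀ _ (by rwa [mul_comm] at hgfδ)
    have hcross2 : f * (γ * g + α) = δ * g + β := by
      linear_combination hcross + (α * f - δ * g) * htwoK
    set c0' := b0 * α + b3 * γ * g ^ 4 + β with hc0'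
    set c1' := b0 * γ + b1 * α + δ with hc1'
    set c2' := b1 * γ + b2 * α with hc2'
    set c3' := b2 * γ + b3 * α with hc3'
    have hdepeq : c0' + c1' * g + c2' * g ^ 2 + c3' * g ^ 3 = 0 := by
      rw [hc0', hc1', hc2', hc3']
      linear_combination (γ * g + α) * hfK - hcross2 + (δ * g + β) * htwoK
        + (b0 * α + b0 * γ * g + α * b3 * g ^ 3 + α * g * b1 + α * g ^ 2 * b2
          + b3 * γ * g ^ 4 + γ * g ^ 2 * b1 + γ * g ^ 3 * b2 - g * δ - β) * htwoK
    have hc0F : c0' ∈ kFour k K :=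
      add_mem (add_mem (mul_mem hb0F hαF)
        (mul_mem (mul_mem hb3F hγF) (SYaux.pow4_mem_kFour g))) hβF
    have hc1F : c1' ∈ kFour k K := add_mem (add_mem (mul_mem hb0F hγF) (mul_mem hb1F hαF)) hδF
    have hc2F : c2' ∈ kFour k K := add_mem (mul_mem hb1F hγF) (mul_mem hb2F hαF)
    have hc3F : c3' ∈ kFour k K := add_mem (mul_mem hb2F hγF) (mul_mem hb3F hαF)
    obtain ⟨hC0, hC1, hC2, hC3⟩ :=
      SYaux.indep_four hfg htr hdeg hg hc0F hc1F hc2F hc3F hdepeq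
    rw [hc2'] at hC2
    rw [hc3'] at hC3
    have hbb : b2 ^ 2 = b1 * b3 := by
      by_cases hαz : α = 0
      · by_cases hγz : γ = 0
        · exfalso
          apply hdet
          have hδz : δ = 0 := by
            have hh := hC1
            rw [hc1'] at hh
            rw [hαz, hγz] at hh
            linear_combination hh
          rw [hαz, hγz]
          ring
        · have hb1z : b1 = 0 := by
            have h := hC2
            rw [hαz, mul_zero, add_zero] at h
            exact (mul_eq_zero.mp h).resolve_right hγz
          have hb2z : b2 = 0 := by
            have h := hC3
            rw [hαz, mul_zero, add_zero] at h
            exact (mul_eq_zero.mp h).resolve_right hγz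
          rw [hb1z, hb2z]
          ring
      · by_cases hγz : γ = 0
        · have hb3z : b3 = 0 := by
            have h := hC3
            rw [hγz, mul_zero, zero_add] at h
            exact (mul_eq_zero.mp h).resolve_right hαz
          have hb2z : b2 = 0 := by
            have h := hC2
            rw [hγz, mul_zero, zero_add] at h
            exact (mul_eq_zero.mp h).resolve_right hαz
          rw [hb3z, hb2z]
          ring
        · have hkey : (b2 ^ 2 - b1 * b3) * (α * γ) = 0 := by
            linear_combination (b2 * γ) * hC2 + (-(b1 * γ)) * hC3
          have h2 := (mul_eq_zero.mp hkey).resolve_right (mul_ne_zero hαz hγz)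
          linear_combination h2
    have hs0 : s = 0 := hs0iff.mpr hbb
    rw [hs0, zero_smul]
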